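/- Let G be a finite group. The Radon transform is injective on G if and only if every irreducible finite-dimensional complex representation ρ of G has a nonzero fixed point, i.e. for every such ρ there exist x ∈ G with x ≠ 1 and a nonzero vector v with ρ(x) v = v. Equivalently, the Radon transform fails to be injective on G exactly when G admits a fixed-point-free irreducible complex representation. -/

import Mathlib

/-- The Radon transform of `f` at `(x, γ)`: the sum of `f` over the geodesic
determined by the homomorphism `γ : C_n → G`, translated by `x`. -/
noncomputable def radonSum {G : Type*} [Group G] {n : ℕ} [NeZero n]
    (f : G → ℂ) (γ : Multiplicative (ZMod n) →* G) (x : G) : ℂ :=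
  ∑ t : ZMod n, f (x * γ (Multiplicative.ofAdd t))

/-- All Radon transforms of `f` (over geodesics of all lengths `n ≥ 2`) vanish. -/
def RadonNull (G : Type*) [Group G] (f : G → ℂ) : Prop :=
  ∀ (n : ℕ) (hn : 2 ≤ n) (γ : Multiplicative (ZMod n) →* G), γ ≠ 1 → ∀ x : G,
    haveI : NeZero n := ⟨by omega⟩
    radonSum f γ x = 0

/-- The Radon transform is injective on `G`. -/
def RadonInjective (G : Type*) [Group G] : Prop :=
  ∀ f : G → ℂ, RadonNull G f → f = 0

open Multiplicative

private lemma pow_eq_pow_mod_of_pow_eq_one' {M : Type*} [Monoid M] {x : M} {n : ℕ}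
    (h : x ^ n = 1) (a : ℕ) : x ^ a = x ^ (a % n) := by
  conv_lhs => rw [← Nat.mod_add_div a n]
  rw [pow_add, pow_mul, h, one_pow, mul_one]

private lemma hom_apply_ofAdd {G : Type*} [Group G] {n : ℕ} [NeZero n]
    (γ : Multiplicative (ZMod n) →* G) (t : ZMod n) :
    γ (ofAdd t) = γ (ofAdd 1) ^ t.val := by
  rw [← map_pow]
  congr 1
  rw [← ofAdd_nsmul, nsmul_eq_mul, mul_one, ZMod.natCast_rightInverse t]

private lemma hom_gen_ne_one {G : Type*} [Group G] {n : ℕ} [NeZero n]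
    {γ : Multiplicative (ZMod n) →* G} (hγ : γ ≠ 1) :
    γ (ofAdd (1 : ZMod n)) ≠ 1 := by
  intro h
  apply hγ
  ext s
  have : γ (ofAdd (toAdd s)) = 1 := by
    rw [hom_apply_ofAdd, h, one_pow]
  exact this

private lemma hom_gen_pow_n {G : Type*} [Group G] {n : ℕ} [NeZero n]
    (γ : Multiplicative (ZMod n) →* G) :
    γ (ofAdd (1 : ZMod n)) ^ n = 1 := by
  rw [← map_pow, ← ofAdd_nsmul, nsmul_eq_mul, mul_one, ZMod.natCast_self]
  exact map_one γ

/-- Matrix coefficients of a fixed-point-free representation are Radon-null. -/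
private lemma radonNull_matrixCoeff {G V : Type*} [Group G] [AddCommGroup V] [Module ℂ V]
    (ρ : Representation ℂ G V)
    (hfpf : ∀ x : G, x ≠ 1 → ∀ v : V, ρ x v = v → v = 0)
    (φ : Module.Dual ℂ V) (v₀ : V) :
    RadonNull G (fun y => φ (ρ y v₀)) := by
  intro n hn γ hγ x
  haveI : NeZero n := ⟨by omega⟩
  haveI : Fact (1 < n) := ⟨by omega⟩
  set g := γ (ofAdd (1 : ZMod n)) with hg
  have hρgn : (ρ g) ^ n = 1 := by rw [← map_pow, hom_gen_pow_n γ, map_one]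
  set w : V := ∑ t : ZMod n, ((ρ g) ^ t.val) v₀ with hw
  have hfix : ρ g w = w := by
    rw [hw, map_sum]
    have key : ∀ t : ZMod n, ρ g (((ρ g) ^ t.val) v₀) = ((ρ g) ^ (t + 1).val) v₀ := by
      intro t
      have h1 : (t + 1).val = (t.val + 1) % n := by
        rw [ZMod.val_add, ZMod.val_one]
      rw [h1, ← pow_eq_pow_mod_of_pow_eq_one' hρgn, pow_succ']
      rfl
    rw [Finset.sum_congr rfl (fun t _ => key t)]
    exact Fintype.sum_equiv (Equiv.addRight (1 : ZMod n)) _ _ (fun t => rfl)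
  have hw0 : w = 0 := hfpf g (hom_gen_ne_one hγ) w hfix
  show radonSum (fun y => φ (ρ y v₀)) γ x = 0
  have : radonSum (fun y => φ (ρ y v₀)) γ x = φ (ρ x w) := by
    rw [radonSum, hw, map_sum, map_sum]
    apply Finset.sum_congr rfl
    intro t _
    rw [hom_apply_ofAdd γ t, ← hg, map_mul, map_pow]
    rfl
  rw [this, hw0, map_zero, map_zero]

/-- A Radon-null function invariant under right translation by some `x ≠ 1` is zero. -/
private lemma radonNull_invariant_eq_zero {G : Type*} [Group G] [Fintype G] {x : G}
    (hx : x ≠ 1) {f : G → ℂ} (hf : RadonNull G f)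
    (hfix : ∀ y : G, f (y * x) = f y) : f = 0 := by
  have hpow : ∀ (k : ℕ) (y : G), f (y * x ^ k) = f y := by
    intro k
    induction k with
    | zero => intro y; simp
    | succ k ih =>
      intro y
      rw [pow_succ, ← mul_assoc, hfix, ih]
  have h0 : 0 < orderOf x := orderOf_pos x
  have h1 : orderOf x ≠ 1 := fun h => hx (orderOf_eq_one_iff.mp h)
  set n := orderOf x with hn
  have hn2 : 2 ≤ n := by omega
  haveI : NeZero n := ⟨by omega⟩
  haveI : Fact (1 < n) := ⟨by omega⟩
  have hxn : x ^ n = 1 := pow_orderOf_eq_one x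
  let γ : Multiplicative (ZMod n) →* G :=
    { toFun := fun t => x ^ (toAdd t).val
      map_one' := by
        show x ^ (0 : ZMod n).val = 1
        rw [ZMod.val_zero, pow_zero]
      map_mul' := fun a b => by
        show x ^ (toAdd a + toAdd b).val = x ^ (toAdd a).val * x ^ (toAdd b).val
        rw [ZMod.val_add, ← pow_eq_pow_mod_of_pow_eq_one' hxn, pow_add] }
  have hγ : γ ≠ 1 := by
    intro h
    apply hx
    have := DFunLike.congr_fun h (ofAdd (1 : ZMod n))
    simpa [γ, ZMod.val_one] using this
  funext y
  have hRS := hf n hn2 γ hγ y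
  have hsum : radonSum f γ y = (n : ℂ) * f y := by
    rw [radonSum]
    have heach : ∀ t : ZMod n, f (y * γ (ofAdd t)) = f y := by
      intro t
      show f (y * x ^ (toAdd (ofAdd t)).val) = f y
      exact hpow _ y
    rw [Finset.sum_congr rfl (fun t _ => heach t), Finset.sum_const, Finset.card_univ,
      ZMod.card, nsmul_eq_mul]
  rw [hsum] at hRS
  have hne : (n : ℂ) ≠ 0 := Nat.cast_ne_zero.mpr (by omega)
  exact (mul_eq_zero.mp hRS).resolve_left hne

/-- The right regular representation of `G` on `G → ℂ`. -/
private def rreg (G : Type*) [Group G] : Representation ℂ G (G → ℂ) where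
  toFun a :=
    { toFun := fun f y => f (y * a)
      map_add' := fun f g => rfl
      map_smul' := fun c f => rfl }
  map_one' := by ext f y; simp
  map_mul' a b := by ext f y; simp [Module.End.mul_apply, mul_assoc]

private lemma rreg_apply {G : Type*} [Group G] (a : G) (f : G → ℂ) (y : G) :
    rreg G a f y = f (y * a) := rfl

/-- The subspace of Radon-null functions. -/
private noncomputable def radonNullSub (G : Type*) [Group G] [Fintype G] :
    Submodule ℂ (G → ℂ) where
  carrier := {f | RadonNull G f}
  add_mem' := by
    intro f g hf hg n hn γ hγ x
    haveI : NeZero n := ⟨by omega⟩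
    have h1 := hf n hn γ hγ x
    have h2 := hg n hn γ hγ x
    show radonSum (f + g) γ x = 0
    simp only [radonSum, Pi.add_apply, Finset.sum_add_distrib] at *
    rw [h1, h2, add_zero]
  zero_mem' := by
    intro n hn γ hγ x
    haveI : NeZero n := ⟨by omega⟩
    show radonSum 0 γ x = 0
    simp [radonSum]
  smul_mem' := by
    intro c f hf n hn γ hγ x
    haveI : NeZero n := ⟨by omega⟩
    have h1 := hf n hn γ hγ x
    show radonSum (c • f) γ x = 0
    simp only [radonSum, Pi.smul_apply, smul_eq_mul, ← Finset.mul_sum] at *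
    rw [h1, mul_zero]

private def conjHom {G : Type*} [Group G] {n : ℕ}
    (a : G) (γ : Multiplicative (ZMod n) →* G) : Multiplicative (ZMod n) →* G where
  toFun s := a⁻¹ * γ s * a
  map_one' := by simp
  map_mul' s t := by simp [map_mul]; group

private lemma radonNullSub_invariant {G : Type*} [Group G] [Fintype G] (a : G)
    {f : G → ℂ} (hf : f ∈ radonNullSub G) : rreg G a f ∈ radonNullSub G := by
  intro n hn γ hγ x
  haveI : NeZero n := ⟨by omega⟩
  have hγ' : conjHom a γ ≠ 1 := by
    intro h
    apply hγ
    ext s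
    have hs := DFunLike.congr_fun h (ofAdd s)
    show γ (ofAdd s) = 1
    simp only [conjHom, MonoidHom.coe_mk, OneHom.coe_mk, MonoidHom.one_apply] at hs ⊢
    have : γ (ofAdd s) = a * (a⁻¹ * γ (ofAdd s) * a) * a⁻¹ := by group
    rw [this, hs, mul_one, mul_inv_cancel]
  have := hf n hn (conjHom a γ) hγ' (x * a)
  show radonSum (rreg G a f) γ x = 0
  simp only [radonSum, rreg_apply, conjHom, MonoidHom.coe_mk, OneHom.coe_mk] at this ⊢
  rw [← this]
  apply Finset.sum_congr rfl
  intro t _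
  congr 1
  group

/-- Restriction of a representation to an invariant submodule. -/
private def resRep {G V : Type*} [Group G] [AddCommGroup V] [Module ℂ V]
    (ρ : Representation ℂ G V) (U : Submodule ℂ V)
    (hU : ∀ a : G, ∀ v ∈ U, ρ a v ∈ U) : Representation ℂ G ↥U where
  toFun a := (ρ a).restrict (hU a)
  map_one' := by
    ext v
    simp [LinearMap.restrict_apply]
  map_mul' a b := by
    ext v
    simp [LinearMap.restrict_apply, Module.End.mul_apply]

/-- Conjugation of a representation by a linear equivalence. -/
private def conjRep {G V W : Type*} [Group G] [AddCommGroup V] [Module ℂ V]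
    [AddCommGroup W] [Module ℂ W] (ρ : Representation ℂ G V) (e : V ≃ₗ[ℂ] W) :
    Representation ℂ G W where
  toFun a := e.toLinearMap ∘ₗ ρ a ∘ₗ e.symm.toLinearMap
  map_one' := by ext w; simp
  map_mul' a b := by ext w; simp [Module.End.mul_apply]

theorem radon_injective_iff_no_fpf_rep {G : Type*} [Group G] [Fintype G] :
    RadonInjective G ↔
      ∀ (V : Type) [AddCommGroup V] [Module ℂ V] [FiniteDimensional ℂ V]
        (ρ : Representation ℂ G V),
        (Nontrivial V ∧
          ∀ W : Submodule ℂ V, (∀ x : G, ∀ v ∈ W, ρ x v ∈ W) → W = ⊥ ∨ W = ⊤) →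
        ∃ (x : G) (v : V), x ≠ 1 ∧ v ≠ 0 ∧ ρ x v = v := by
  constructor
  · intro hinj V _ _ _ ρ hVirr
    obtain ⟨hnt, -⟩ := hVirr
    by_contra hcon
    push_neg at hcon
    have hfpf : ∀ x : G, x ≠ 1 → ∀ v : V, ρ x v = v → v = 0 := by
      intro x hx v hv
      by_contra h0
      exact hcon x v hx h0 hv
    obtain ⟨v₀, hv₀⟩ := exists_ne (0 : V)
    have hφex : ¬ ∀ φ : Module.Dual ℂ V, φ v₀ = 0 := by
      rw [Module.forall_dual_apply_eq_zero_iff]; exact hv₀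
    push_neg at hφex
    obtain ⟨φ, hφ⟩ := hφex
    have hf0 := hinj _ (radonNull_matrixCoeff ρ hfpf φ v₀)
    apply hφ
    have := congrFun hf0 1
    simpa using this
  · intro hrep f hf
    by_contra hf0
    classical
    have hfW : f ∈ radonNullSub G := hf
    have hWne : radonNullSub G ≠ ⊥ := by
      intro h
      apply hf0
      rw [h, Submodule.mem_bot] at hfW
      exact hfW
    let P : Submodule ℂ (G → ℂ) → Prop := fun U =>
      U ≠ ⊥ ∧ U ≤ radonNullSub G ∧ ∀ a : G, ∀ g ∈ U, rreg G a g ∈ U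
    have hPW : P (radonNullSub G) :=
      ⟨hWne, le_refl _, fun a g hg => radonNullSub_invariant a hg⟩
    have hex : ∃ k, ∃ U, P U ∧ Module.finrank ℂ ↥U = k := ⟨_, radonNullSub G, hPW, rfl⟩
    obtain ⟨U, hPU, hUrank⟩ := Nat.find_spec hex
    have hmin : ∀ U', P U' → U' ≤ U → U' = U := by
      intro U' hPU' hle
      have hk : Nat.find hex ≤ Module.finrank ℂ ↥U' := Nat.find_min' hex ⟨U', hPU', rfl⟩
      exact Submodule.eq_of_le_of_finrank_le hle (by rw [hUrank]; exact hk)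
    obtain ⟨hUne, hUW, hUinv⟩ := hPU
    haveI : Nontrivial ↥U := Submodule.nontrivial_iff_ne_bot.mpr hUne
    let e : ↥U ≃ₗ[ℂ] (Fin (Module.finrank ℂ ↥U) → ℂ) := (Module.finBasis ℂ ↥U).equivFun
    haveI : Nontrivial (Fin (Module.finrank ℂ ↥U) → ℂ) := e.symm.toEquiv.nontrivial
    let ρU := resRep (rreg G) U hUinv
    let ρ' := conjRep ρU e
    have hρ' : ∀ (a : G) w, ρ' a w = e (ρU a (e.symm w)) := fun a w => rfl
    have hirr : Nontrivial (Fin (Module.finrank ℂ ↥U) → ℂ) ∧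
        ∀ W' : Submodule ℂ (Fin (Module.finrank ℂ ↥U) → ℂ),
          (∀ x : G, ∀ v ∈ W', ρ' x v ∈ W') → W' = ⊥ ∨ W' = ⊤ := by
      refine ⟨inferInstance, ?_⟩
      intro W' hW'
      by_cases hQ : (W'.map e.symm.toLinearMap).map U.subtype = ⊥
      · left
        rw [Submodule.eq_bot_iff]
        intro w hw
        have hmem : U.subtype (e.symm w) ∈ (W'.map e.symm.toLinearMap).map U.subtype :=
          Submodule.mem_map_of_mem (Submodule.mem_map_of_mem hw)
        rw [hQ, Submodule.mem_bot] at hmem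
        have h1 : e.symm w = 0 := Subtype.ext hmem
        have h2 := congrArg e h1
        simpa using h2
      · right
        have hQU : (W'.map e.symm.toLinearMap).map U.subtype = U := by
          refine hmin _ ⟨hQ, ?_, ?_⟩ ?_
          · intro q hq
            obtain ⟨u, hu, rfl⟩ := hq
            exact hUW u.2
          · intro a g hg
            obtain ⟨u, hu, rfl⟩ := hg
            obtain ⟨w', hw', rfl⟩ := hu
            show U.subtype (ρU a (e.symm w')) ∈ _
            apply Submodule.mem_map_of_mem
            have h2 : ρU a (e.symm w') = e.symm (ρ' a w') := by
              rw [hρ', e.symm_apply_apply]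
            rw [h2]
            exact Submodule.mem_map_of_mem (hW' a w' hw')
          · intro q hq
            obtain ⟨u, hu, rfl⟩ := hq
            exact u.2
        rw [eq_top_iff]
        intro w _
        have hmem : (U.subtype (e.symm w) : G → ℂ) ∈ (W'.map e.symm.toLinearMap).map U.subtype := by
          rw [hQU]; exact (e.symm w).2
        obtain ⟨u, hu, huw⟩ := hmem
        have hu2 : u = e.symm w := Subtype.ext huw
        rw [hu2] at hu
        obtain ⟨w'', hw'', hww⟩ := hu
        have hww' : w'' = w := by
          have := congrArg e hww
          simpa using this
        rwa [← hww']
    obtain ⟨x, v', hx1, hv'0, hfix'⟩ := hrep (Fin (Module.finrank ℂ ↥U) → ℂ) ρ' hirr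
    have hfixU : ρU x (e.symm v') = e.symm v' := by
      have h2 := congrArg e.symm hfix'
      rw [hρ', e.symm_apply_apply] at h2
      exact h2
    have hvne : ((e.symm v' : ↥U) : G → ℂ) ≠ 0 := by
      intro h
      apply hv'0
      have hv0 : (e.symm v' : ↥U) = 0 := Subtype.ext h
      have := congrArg e hv0
      simpa using this
    have hcoe : ∀ y : G, ((e.symm v' : ↥U) : G → ℂ) (y * x) = ((e.symm v' : ↥U) : G → ℂ) y := by
      intro y
      have h3 : rreg G x ((e.symm v' : ↥U) : G → ℂ) = ((e.symm v' : ↥U) : G → ℂ) :=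
        congrArg Subtype.val hfixU
      exact congrFun h3 y
    have hzero : ((e.symm v' : ↥U) : G → ℂ) = 0 :=
      radonNull_invariant_eq_zero hx1 (hUW (e.symm v').2) hcoe
    exact hvne hzero
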